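/- Let K be a real inner product space, D ≥ 2, and let ι ∈ K be a nonzero vector. Let (t_i)_{i=0}^{D−1} be an orthonormal family in K with t_0 = ι/‖ι‖. For 1 ≤ j ≤ D−1 set f(j) := √D/√((D−j)(D−(j−1))), and define φ_0 := (‖ι‖/D)·(t_0 − ∑_{j=1}^{D−1} f(j)·t_j) and, for 1 ≤ i ≤ D−1, φ_i := (‖ι‖/D)·(t_0 − ∑_{j=1}^{i−1} f(j)·t_j + (D−i)·f(i)·t_i). Then ⟨φ_i, φ_j⟩ = (‖ι‖²/D)·δ_{ij} for all i, j, and ∑_{i=0}^{D−1} φ_i = ι. -/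

import Mathlib

open scoped RealInnerProductSpace

/-- Construction 2, explicit form: Given vectors `t 0, …, t (D-1)`
orthonormal with `t 0 = ι/‖ι‖`, the explicitly defined vectors
`φ 0 = (‖ι‖/D)(t 0 - ∑_{j=1}^{D-1} f j • t j)` and
`φ i = (‖ι‖/D)(t 0 - ∑_{j=1}^{i-1} f j • t j + (D-i) f i • t i)` for
`1 ≤ i ≤ D-1`, where `f j = √D/√((D-j)(D-(j-1)))`, satisfy
`⟪φ i, φ j⟫ = (‖ι‖²/D) δ_{ij}` and `∑_{i<D} φ i = ι`. -/
theorem orthogonal_basis_with_fixed_sum_construction_two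
    (K : Type*) [NormedAddCommGroup K] [InnerProductSpace ℝ K]
    (D : ℕ) (hD : 2 ≤ D) (ι : K) (hι : ι ≠ 0)
    (t : ℕ → K)
    (ht : ∀ i < D, ∀ j < D, ⟪t i, t j⟫ = if i = j then 1 else 0)
    (ht0 : t 0 = ‖ι‖⁻¹ • ι)
    (f : ℕ → ℝ)
    (hf : ∀ j, 1 ≤ j → j ≤ D - 1 →
      f j = Real.sqrt D / Real.sqrt (((D : ℝ) - j) * ((D : ℝ) - ((j : ℝ) - 1))))
    (φ : ℕ → K)
    (hφ0 : φ 0 = (‖ι‖ / D) • (t 0 - ∑ j ∈ Finset.Ico 1 D, f j • t j))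
    (hφ : ∀ i, 1 ≤ i → i ≤ D - 1 →
      φ i = (‖ι‖ / D) •
        (t 0 - ∑ j ∈ Finset.Ico 1 i, f j • t j + (((D : ℝ) - i) * f i) • t i)) :
    (∀ i < D, ∀ j < D, ⟪φ i, φ j⟫ = if i = j then ‖ι‖ ^ 2 / D else 0) ∧
    (∑ i ∈ Finset.range D, φ i = ι) := by
  have hD0 : (0:ℝ) < D := by positivity
  have hDne : (D:ℝ) ≠ 0 := ne_of_gt hD0
  set c : ℕ → ℕ → ℝ := fun i k =>
    if k = 0 then 1 else if i = 0 then -f k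
    else if k < i then -f k else if k = i then ((D:ℝ) - i) * f i else 0 with hc
  -- f squared
  have hf2 : ∀ m, 1 ≤ m → m ≤ D - 1 →
      f m ^ 2 = (D:ℝ) / (((D:ℝ) - m) * ((D:ℝ) - m + 1)) := by
    intro m h1 h2
    have hmD : (m:ℝ) < D := by
      have : m < D := by omega
      exact_mod_cast this
    have hp1 : (0:ℝ) < (D:ℝ) - m := by linarith
    have hp2 : (0:ℝ) < (D:ℝ) - m + 1 := by linarith
    have h3 : (D:ℝ) - ((m:ℝ) - 1) = (D:ℝ) - m + 1 := by ring
    rw [hf m h1 h2, h3, div_pow, Real.sq_sqrt (le_of_lt hD0),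
      Real.sq_sqrt (by positivity)]
  -- partial sums of f j ^ 2
  have hS : ∀ m, 1 ≤ m → m ≤ D →
      ∑ k ∈ Finset.Ico 1 m, f k ^ 2 = (D:ℝ) / ((D:ℝ) - m + 1) - 1 := by
    intro m h1 h2
    induction m, h1 using Nat.le_induction with
    | base => simp [hDne]
    | succ m hm ih =>
      have hmD : m ≤ D - 1 := by omega
      have hmD' : (m:ℝ) < D := by exact_mod_cast (by omega : m < D)
      have hp1 : (0:ℝ) < (D:ℝ) - m := by linarith
      have hp2 : (0:ℝ) < (D:ℝ) - m + 1 := by linarith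
      have hne1 : (D:ℝ) - m ≠ 0 := ne_of_gt hp1
      have hne2 : (D:ℝ) - m + 1 ≠ 0 := ne_of_gt hp2
      rw [Finset.sum_Ico_succ_top (by omega), ih (by omega),
        hf2 m hm hmD]
      have hcst : (D:ℝ) - (↑(m+1):ℝ) + 1 = (D:ℝ) - m := by push_cast; ring
      rw [hcst]
      field_simp
      ring
  -- the key scalar sums
  have key0 : (1:ℝ) + ∑ k ∈ Finset.Ico 1 D, f k ^ 2 = D := by
    rw [hS D (by omega) le_rfl]
    have : (D:ℝ) - D + 1 = 1 := by ring
    rw [this]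
    field_simp
    ring
  have keyOff : ∀ m, 1 ≤ m → m ≤ D - 1 →
      (1:ℝ) + ∑ k ∈ Finset.Ico 1 m, f k ^ 2 - ((D:ℝ) - m) * f m ^ 2 = 0 := by
    intro m h1 h2
    have hmD' : (m:ℝ) < D := by exact_mod_cast (by omega : m < D)
    have hp1 : (0:ℝ) < (D:ℝ) - m := by linarith
    have hp2 : (0:ℝ) < (D:ℝ) - m + 1 := by linarith
    have hne1 : (D:ℝ) - m ≠ 0 := ne_of_gt hp1
    have hne2 : (D:ℝ) - m + 1 ≠ 0 := ne_of_gt hp2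
    rw [hS m h1 (by omega), hf2 m h1 h2]
    field_simp
    ring
  have keyDiag : ∀ m, 1 ≤ m → m ≤ D - 1 →
      (1:ℝ) + ∑ k ∈ Finset.Ico 1 m, f k ^ 2 + (((D:ℝ) - m) * f m) * (((D:ℝ) - m) * f m) = D := by
    intro m h1 h2
    have hmD' : (m:ℝ) < D := by exact_mod_cast (by omega : m < D)
    have hp1 : (0:ℝ) < (D:ℝ) - m := by linarith
    have hp2 : (0:ℝ) < (D:ℝ) - m + 1 := by linarith
    have hfm := hf2 m h1 h2
    have : (((D:ℝ) - m) * f m) * (((D:ℝ) - m) * f m) = ((D:ℝ)-m)^2 * f m ^2 := by ring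
    have hne1 : (D:ℝ) - m ≠ 0 := ne_of_gt hp1
    have hne2 : (D:ℝ) - m + 1 ≠ 0 := ne_of_gt hp2
    rw [this, hS m h1 (by omega), hfm]
    field_simp
    ring
  -- express φ in the basis
  have hφ' : ∀ i < D, φ i = (‖ι‖ / D) • ∑ k ∈ Finset.range D, c i k • t k := by
    intro i hi
    rcases Nat.eq_zero_or_pos i with rfl | hi1
    · rw [hφ0, Finset.range_eq_Ico, Finset.sum_eq_sum_Ico_succ_bot (by omega : 0 < D)]
      congr 1
      have h0 : c 0 0 • t 0 = t 0 := by simp [hc]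
      rw [h0, sub_eq_add_neg, ← Finset.sum_neg_distrib]
      congr 1
      apply Finset.sum_congr rfl
      intro k hk
      have hk1 : k ≠ 0 := by simp at hk; omega
      simp [hc, hk1]
    · rw [hφ i hi1 (by omega), Finset.range_eq_Ico,
        Finset.sum_eq_sum_Ico_succ_bot (by omega : 0 < D),
        ← Finset.sum_Ico_consecutive _ (by omega : 1 ≤ i) (le_of_lt hi),
        Finset.sum_eq_sum_Ico_succ_bot hi]
      congr 1
      have h0 : c i 0 • t 0 = t 0 := by simp [hc]
      rw [h0]
      have hA : ∑ k ∈ Finset.Ico 1 i, c i k • t k = -∑ j ∈ Finset.Ico 1 i, f j • t j := by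
        rw [← Finset.sum_neg_distrib]
        apply Finset.sum_congr rfl
        intro k hk
        simp only [Finset.mem_Ico] at hk
        have hk1 : k ≠ 0 := by omega
        simp [hc, hk1, hk.2]
      have hB : c i i • t i = (((D:ℝ) - i) * f i) • t i := by
        have : i ≠ 0 := by omega
        simp [hc, this]
      have hC : ∑ k ∈ Finset.Ico (i+1) D, c i k • t k = 0 := by
        apply Finset.sum_eq_zero
        intro k hk
        simp only [Finset.mem_Ico] at hk
        have hk1 : k ≠ 0 := by omega
        have hk2 : ¬ k < i := by omega
        have hk3 : k ≠ i := by omega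
        have hi0 : i ≠ 0 := by omega
        simp [hc, hk1, hk2, hk3, hi0]
      rw [hA, hB, hC, add_zero]
      abel
  -- inner products in terms of coefficients
  have hip : ∀ i < D, ∀ j < D,
      ⟪φ i, φ j⟫ = (‖ι‖ / D)^2 * ∑ k ∈ Finset.range D, c i k * c j k := by
    intro i hi j hj
    rw [hφ' i hi, hφ' j hj, real_inner_smul_left, real_inner_smul_right]
    rw [sum_inner]
    have : ∀ k ∈ Finset.range D,
        ⟪c i k • t k, ∑ l ∈ Finset.range D, c j l • t l⟫ = c i k * c j k := by
      intro k hk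
      simp only [Finset.mem_range] at hk
      rw [inner_sum, Finset.sum_eq_single k]
      · rw [real_inner_smul_left, real_inner_smul_right, ht k hk k hk]
        simp
      · intro l hl hlk
        simp only [Finset.mem_range] at hl
        rw [real_inner_smul_left, real_inner_smul_right, ht k hk l hl]
        simp [Ne.symm hlk]
      · intro h; exact absurd (Finset.mem_range.mpr hk) h
    rw [Finset.sum_congr rfl this]
    ring
  -- the diagonal/off-diagonal coefficient sums
  have hkey : ∀ i < D, ∀ j < D, i ≤ j →
      ∑ k ∈ Finset.range D, c i k * c j k = if i = j then (D:ℝ) else 0 := by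
    intro i hi j hj hij
    rw [Finset.range_eq_Ico, Finset.sum_eq_sum_Ico_succ_bot (by omega : 0 < D)]
    have h00 : c i 0 * c j 0 = 1 := by simp [hc]
    rw [h00]
    rcases Nat.eq_zero_or_pos i with rfl | hi1
    · rcases Nat.eq_zero_or_pos j with rfl | hj1
      · have : ∑ k ∈ Finset.Ico 1 D, c 0 k * c 0 k = ∑ k ∈ Finset.Ico 1 D, f k ^ 2 := by
          apply Finset.sum_congr rfl
          intro k hk
          simp only [Finset.mem_Ico] at hk
          have : k ≠ 0 := by omega
          simp [hc, this]; ring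
        rw [this]
        simpa using key0
      · -- i = 0 < j
        have hjne : (0:ℕ) ≠ j := by omega
        rw [if_neg hjne,
          ← Finset.sum_Ico_consecutive _ (by omega : 1 ≤ j) (le_of_lt hj),
          Finset.sum_eq_sum_Ico_succ_bot hj]
        have hA : ∑ k ∈ Finset.Ico 1 j, c 0 k * c j k = ∑ k ∈ Finset.Ico 1 j, f k ^ 2 := by
          apply Finset.sum_congr rfl
          intro k hk
          simp only [Finset.mem_Ico] at hk
          have hk1 : k ≠ 0 := by omega
          have hj0 : j ≠ 0 := by omega
          simp [hc, hk1, hj0, hk.2]; ring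
        have hB : c 0 j * c j j = -(((D:ℝ) - j) * f j ^ 2) := by
          have hj0 : j ≠ 0 := by omega
          simp [hc, hj0]; ring
        have hC : ∑ k ∈ Finset.Ico (j+1) D, c 0 k * c j k = 0 := by
          apply Finset.sum_eq_zero
          intro k hk
          simp only [Finset.mem_Ico] at hk
          have hk1 : k ≠ 0 := by omega
          have hj0 : j ≠ 0 := by omega
          have hk2 : ¬ k < j := by omega
          have hk3 : k ≠ j := by omega
          simp [hc, hk1, hj0, hk2, hk3]
        rw [hA, hB, hC, add_zero]
        have := keyOff j hj1 (by omega)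
        linarith
    · -- 1 ≤ i ≤ j
      rw [← Finset.sum_Ico_consecutive _ (by omega : 1 ≤ i) (le_of_lt hi),
        Finset.sum_eq_sum_Ico_succ_bot hi]
      have hA : ∑ k ∈ Finset.Ico 1 i, c i k * c j k = ∑ k ∈ Finset.Ico 1 i, f k ^ 2 := by
        apply Finset.sum_congr rfl
        intro k hk
        simp only [Finset.mem_Ico] at hk
        have hk1 : k ≠ 0 := by omega
        have hj0 : j ≠ 0 := by omega
        have hkj : k < j := by omega
        simp [hc, hk1, hj0, hk.2, hkj]; ring
      have hC : ∑ k ∈ Finset.Ico (i+1) D, c i k * c j k = 0 := by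
        apply Finset.sum_eq_zero
        intro k hk
        simp only [Finset.mem_Ico] at hk
        have hk1 : k ≠ 0 := by omega
        have hi0 : i ≠ 0 := by omega
        have hk2 : ¬ k < i := by omega
        have hk3 : k ≠ i := by omega
        simp [hc, hk1, hi0, hk2, hk3]
      rw [hA, hC, add_zero]
      rcases eq_or_lt_of_le hij with rfl | hlt
      · rw [if_pos rfl]
        have hcii : c i i * c i i = (((D:ℝ) - i) * f i) * (((D:ℝ) - i) * f i) := by
          have hi0 : i ≠ 0 := by omega
          simp [hc, hi0]
        rw [hcii]
        have := keyDiag i hi1 (by omega)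
        linarith
      · rw [if_neg (by omega)]
        have hcij : c i i * c j i = -(((D:ℝ) - i) * f i ^ 2) := by
          have hi0 : i ≠ 0 := by omega
          have hj0 : j ≠ 0 := by omega
          simp [hc, hi0, hj0, hlt]; ring
        rw [hcij]
        have := keyOff i hi1 (by omega)
        linarith
  constructor
  · intro i hi j hj
    rcases le_total i j with hij | hij
    · rw [hip i hi j hj, hkey i hi j hj hij]
      split_ifs with h
      · rw [div_pow]
        field_simp
      · ring
    · rw [hip i hi j hj]
      have : ∑ k ∈ Finset.range D, c i k * c j k
          = ∑ k ∈ Finset.range D, c j k * c i k := by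
        apply Finset.sum_congr rfl; intro k _; ring
      rw [this, hkey j hj i hi hij]
      by_cases h : i = j
      · subst h
        rw [if_pos rfl, if_pos rfl, div_pow]
        field_simp
      · rw [if_neg (fun hh => h hh.symm), if_neg h]
        ring
  · -- the sum
    have hstep : ∑ i ∈ Finset.range D, φ i
        = (‖ι‖ / D) • ∑ k ∈ Finset.range D, (∑ i ∈ Finset.range D, c i k) • t k := by
      rw [Finset.sum_congr rfl (fun i hi => hφ' i (Finset.mem_range.mp hi)),
        ← Finset.smul_sum, Finset.sum_comm]
      congr 1
      apply Finset.sum_congr rfl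
      intro k _
      rw [Finset.sum_smul]
    have hcol : ∀ k ∈ Finset.range D, (∑ i ∈ Finset.range D, c i k) • t k
        = (if k = 0 then (D:ℝ) else 0) • t k := by
      intro k hk
      simp only [Finset.mem_range] at hk
      rcases Nat.eq_zero_or_pos k with rfl | hk1
      · rw [if_pos rfl]
        congr 1
        have : ∀ i ∈ Finset.range D, c i 0 = 1 := by intro i _; simp [hc]
        rw [Finset.sum_congr rfl this, Finset.sum_const, Finset.card_range]
        simp
      · rw [if_neg (by omega)]
        congr 1
        rw [Finset.range_eq_Ico, Finset.sum_eq_sum_Ico_succ_bot (by omega : 0 < D),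
          ← Finset.sum_Ico_consecutive _ (by omega : 1 ≤ k) (le_of_lt hk),
          Finset.sum_eq_sum_Ico_succ_bot hk]
        have h0 : c 0 k = -f k := by
          have : k ≠ 0 := by omega
          simp [hc, this]
        have hA : ∑ i ∈ Finset.Ico 1 k, c i k = 0 := by
          apply Finset.sum_eq_zero
          intro i hi
          simp only [Finset.mem_Ico] at hi
          have hi0 : i ≠ 0 := by omega
          have hk0 : k ≠ 0 := by omega
          have h1 : ¬ k < i := by omega
          have h2 : k ≠ i := by omega
          simp [hc, hi0, hk0, h1, h2]
        have hB : c k k = ((D:ℝ) - k) * f k := by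
          have : k ≠ 0 := by omega
          simp [hc, this]
        have hC : ∑ i ∈ Finset.Ico (k+1) D, c i k = -(((D:ℝ) - k - 1) * f k) := by
          have : ∀ i ∈ Finset.Ico (k+1) D, c i k = -f k := by
            intro i hi
            simp only [Finset.mem_Ico] at hi
            have hi0 : i ≠ 0 := by omega
            have hk0 : k ≠ 0 := by omega
            have h1 : k < i := by omega
            simp [hc, hi0, hk0, h1]
          rw [Finset.sum_congr rfl this, Finset.sum_const, Nat.card_Ico]
          have hcast : ((D - (k+1) : ℕ) : ℝ) = (D:ℝ) - k - 1 := by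
            have : k + 1 ≤ D := by omega
            push_cast [Nat.cast_sub this]
            ring
          rw [nsmul_eq_mul, hcast]
          ring
        rw [h0, hA, hB, hC]
        ring
    rw [hstep, Finset.sum_congr rfl hcol]
    have hrw : ∀ k ∈ Finset.range D, (if k = 0 then (D:ℝ) else 0) • t k
        = if k = 0 then (D:ℝ) • t k else 0 := by
      intro k _; split_ifs <;> simp
    rw [Finset.sum_congr rfl hrw, Finset.sum_ite_eq' (Finset.range D) 0,
      if_pos (Finset.mem_range.mpr (by omega : 0 < D)), ht0, smul_smul, smul_smul]
    have hn : ‖ι‖ ≠ 0 := norm_ne_zero_iff.mpr hι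
    rw [show ‖ι‖ / (D:ℝ) * (D:ℝ) * ‖ι‖⁻¹ = 1 by field_simp, one_smul]
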